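/- For every integer p ≥ 2, ∫_0^1 Σ_{j=1}^{p−1} C(p,j) · u^{2j−2} · (1−u)^{2(p−j)−2} du ≤ 5, where C(p,j) is the binomial coefficient. -/

import Mathlib

lemma key14 (p : ℕ) (hp : 3 ≤ p) (u : ℝ) (hu : u ∈ Set.Icc (0:ℝ) 1) :
    ∑ j ∈ Finset.Icc 1 (p - 1),
        (p.choose j : ℝ) * u ^ (2 * j - 2) * (1 - u) ^ (2 * (p - j) - 2)
      ≤ (p : ℝ) * (1 - u) ^ (2 * p - 4) + ((p : ℝ) * u ^ (2 * p - 4) + 1) := by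
  obtain ⟨hu0, hu1⟩ := hu
  have h1u0 : (0:ℝ) ≤ 1 - u := by linarith
  have h1u1 : 1 - u ≤ 1 := by linarith
  have hset : Finset.Icc 1 (p - 1) = insert 1 (insert (p - 1) (Finset.Icc 2 (p - 2))) := by
    ext x; simp only [Finset.mem_Icc, Finset.mem_insert]; omega
  rw [hset, Finset.sum_insert (by simp only [Finset.mem_Icc, Finset.mem_insert]; omega),
    Finset.sum_insert (by simp only [Finset.mem_Icc]; omega)]
  have e1 : 2 * 1 - 2 = 0 := by omega
  have e2 : 2 * (p - 1) - 2 = 2 * p - 4 := by omega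
  have e3 : 2 * (p - (p - 1)) - 2 = 0 := by omega
  have hch : (p.choose (p - 1) : ℝ) = p := by
    rw [Nat.choose_symm (by omega)]
    · norm_num
  rw [e1, e2, e3, hch]
  simp only [Nat.choose_one_right, pow_zero, mul_one, one_mul]
  have hmid : ∑ j ∈ Finset.Icc 2 (p - 2),
      (p.choose j : ℝ) * u ^ (2 * j - 2) * (1 - u) ^ (2 * (p - j) - 2) ≤ 1 := by
    have step1 : ∑ j ∈ Finset.Icc 2 (p - 2),
        (p.choose j : ℝ) * u ^ (2 * j - 2) * (1 - u) ^ (2 * (p - j) - 2)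
        ≤ ∑ j ∈ Finset.Icc 2 (p - 2), (p.choose j : ℝ) * u ^ j * (1 - u) ^ (p - j) := by
      apply Finset.sum_le_sum
      intro j hj
      simp only [Finset.mem_Icc] at hj
      have hu' : u ^ (2 * j - 2) ≤ u ^ j := pow_le_pow_of_le_one hu0 hu1 (by omega)
      have hv' : (1 - u) ^ (2 * (p - j) - 2) ≤ (1 - u) ^ (p - j) :=
        pow_le_pow_of_le_one h1u0 h1u1 (by omega)
      have := mul_le_mul hu' hv' (by positivity) (by positivity)
      calc (p.choose j : ℝ) * u ^ (2 * j - 2) * (1 - u) ^ (2 * (p - j) - 2)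
          = (p.choose j : ℝ) * (u ^ (2 * j - 2) * (1 - u) ^ (2 * (p - j) - 2)) := by ring
        _ ≤ (p.choose j : ℝ) * (u ^ j * (1 - u) ^ (p - j)) := by
            apply mul_le_mul_of_nonneg_left this (by positivity)
        _ = (p.choose j : ℝ) * u ^ j * (1 - u) ^ (p - j) := by ring
    refine step1.trans ?_
    have step2 : ∑ j ∈ Finset.Icc 2 (p - 2), (p.choose j : ℝ) * u ^ j * (1 - u) ^ (p - j)
        ≤ ∑ j ∈ Finset.range (p + 1), (p.choose j : ℝ) * u ^ j * (1 - u) ^ (p - j) := by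
      apply Finset.sum_le_sum_of_subset_of_nonneg
      · intro x hx
        simp only [Finset.mem_Icc] at hx
        simp only [Finset.mem_range]; omega
      · intro i _ _; positivity
    refine step2.trans ?_
    have : ∑ j ∈ Finset.range (p + 1), (p.choose j : ℝ) * u ^ j * (1 - u) ^ (p - j)
        = (u + (1 - u)) ^ p := by
      rw [add_pow]
      apply Finset.sum_congr rfl
      intro j _; ring
    rw [this]
    norm_num
  linarith

theorem stmt14 (p : ℕ) (hp : 2 ≤ p) :
    (∫ u in (0 : ℝ)..1, ∑ j ∈ Finset.Icc 1 (p - 1),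
        (p.choose j : ℝ) * u ^ (2 * j - 2) * (1 - u) ^ (2 * (p - j) - 2)) ≤ 5 := by
  rcases eq_or_lt_of_le hp with h2 | h3
  · -- p = 2
    subst h2
    norm_num
  · have hp3 : 3 ≤ p := h3
    have hcontf : Continuous (fun u : ℝ => ∑ j ∈ Finset.Icc 1 (p - 1),
        (p.choose j : ℝ) * u ^ (2 * j - 2) * (1 - u) ^ (2 * (p - j) - 2)) := by
      apply continuous_finset_sum
      intro j _
      fun_prop
    have hcontg : Continuous (fun u : ℝ =>
        (p : ℝ) * (1 - u) ^ (2 * p - 4) + ((p : ℝ) * u ^ (2 * p - 4) + 1)) := by fun_prop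
    have hmono := intervalIntegral.integral_mono_on (μ := MeasureTheory.volume) (by norm_num)
      (hcontf.intervalIntegrable 0 1) (hcontg.intervalIntegrable 0 1)
      (fun u hu => key14 p hp3 u hu)
    refine hmono.trans ?_
    have i1 : (∫ u in (0:ℝ)..1, (1 - u) ^ (2 * p - 4)) = 1 / ((2 * p - 4 : ℕ) + 1 : ℝ) := by
      have := intervalIntegral.integral_comp_sub_left (a := 0) (b := 1)
        (fun x : ℝ => x ^ (2 * p - 4)) 1
      simp only [sub_zero, sub_self] at this
      rw [this, integral_pow]
      norm_num
    have i2 : (∫ u in (0:ℝ)..1, u ^ (2 * p - 4)) = 1 / ((2 * p - 4 : ℕ) + 1 : ℝ) := by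
      rw [integral_pow]; norm_num
    rw [intervalIntegral.integral_add ((Continuous.intervalIntegrable (by fun_prop)) 0 1) ((Continuous.intervalIntegrable (by fun_prop)) 0 1),
        intervalIntegral.integral_add ((Continuous.intervalIntegrable (by fun_prop)) 0 1) ((Continuous.intervalIntegrable (by fun_prop)) 0 1),
        intervalIntegral.integral_const_mul, intervalIntegral.integral_const_mul,
        intervalIntegral.integral_const, i1, i2]
    simp only [smul_eq_mul, mul_one, sub_zero]
    have hcast : ((2 * p - 4 : ℕ) : ℝ) = 2 * (p : ℝ) - 4 := by
      push_cast [Nat.cast_sub (by omega : 4 ≤ 2 * p)]; ring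
    rw [hcast]
    have hp' : (3:ℝ) ≤ p := by exact_mod_cast hp3
    have hpos : (0:ℝ) < 2 * (p:ℝ) - 4 + 1 := by linarith
    have hb : (p:ℝ) * (1 / (2 * (p:ℝ) - 4 + 1)) ≤ 2 := by
      rw [mul_one_div, div_le_iff₀ hpos]; linarith
    linarith
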